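/- The pointwise infimum of two periodically increasing functions ℕ∞ → ℕ∞ is periodically increasing. -/

import Mathlib

open scoped Classical

/-- Production of a finite io-word (`true` = '+' output, `false` = '−' input)
on a finite input budget. -/
def prodList : List Bool → ℕ → ℕ
  | [], _ => 0
  | true :: l, n => 1 + prodList l n
  | false :: _, 0 => 0
  | false :: l, n + 1 => prodList l n

/-- The production function ⟦σ⟧ : ℕ∞ → ℕ∞ of an io-sequence σ (a finite or
infinite word over {−,+}), obtained as the supremum over finite prefixes of σ
and finite budgets below the argument. -/
noncomputable def prodSeq (σ : Stream'.Seq Bool) (n : ℕ∞) : ℕ∞ :=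
  ⨆ (k : ℕ) (m : ℕ) (_ : (m : ℕ∞) ≤ n), (prodList (σ.take k) m : ℕ∞)

/-- ω-continuity (together with monotonicity) on the ω-cpo ℕ∞. -/
def NEContinuous (f : ℕ∞ → ℕ∞) : Prop :=
  Monotone f ∧ ∀ c : ℕ → ℕ∞, Monotone c → f (⨆ k, c k) = ⨆ k, f (c k)

/-- Rational (eventually periodic, possibly finite) io-sequences. -/
def RationalSeq (σ : Stream'.Seq Bool) : Prop :=
  (∃ l : List Bool, σ = Stream'.Seq.ofList l) ∨
  ∃ (u v : List Bool) (h : v ≠ []),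
    σ = (Stream'.Seq.ofList u).append (Stream'.Seq.ofStream (Stream'.cycle v h))

/-- Periodically increasing functions on ℕ∞: monotone, ω-continuous,
determined at ∞ by the finite values, and eventually linear-periodic. -/
def PerInc (f : ℕ∞ → ℕ∞) : Prop :=
  Monotone f ∧
  (∀ c : ℕ → ℕ∞, Monotone c → f (⨆ k, c k) = ⨆ k, f (c k)) ∧
  (f ⊤ = ⨆ n : ℕ, f n) ∧
  ∃ N p q : ℕ, 1 ≤ p ∧ ∀ n : ℕ, N ≤ n → f ((n : ℕ∞) + (p : ℕ∞)) = f n + (q : ℕ∞)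


lemma iSup_min_of_monotone (a b : ℕ → ℕ∞) (ha : Monotone a) (hb : Monotone b) :
    (⨆ k, min (a k) (b k)) = min (⨆ k, a k) (⨆ k, b k) := by
  apply le_antisymm
  · exact iSup_le fun k => le_min (le_trans (min_le_left _ _) (le_iSup a k))
      (le_trans (min_le_right _ _) (le_iSup b k))
  · refine le_of_forall_lt fun x hx => ?_
    rw [lt_min_iff] at hx
    obtain ⟨i, hi⟩ := lt_iSup_iff.mp hx.1
    obtain ⟨j, hj⟩ := lt_iSup_iff.mp hx.2
    have : x < min (a (max i j)) (b (max i j)) :=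
      lt_min (lt_of_lt_of_le hi (ha (le_max_left i j)))
        (lt_of_lt_of_le hj (hb (le_max_right i j)))
    exact lt_of_lt_of_le this (le_iSup (fun k => min (a k) (b k)) (max i j))


lemma iterate_per (f : ℕ∞ → ℕ∞) (N p q : ℕ)
    (h : ∀ n : ℕ, N ≤ n → f ((n : ℕ∞) + (p : ℕ∞)) = f n + (q : ℕ∞)) :
    ∀ k n, N ≤ n → f ((n : ℕ∞) + ((k * p : ℕ) : ℕ∞)) = f n + ((k * q : ℕ) : ℕ∞) := by
  intro k
  induction k with
  | zero => simp
  | succ k ih =>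
    intro n hn
    have e1 : ((n : ℕ∞) + (((k+1) * p : ℕ) : ℕ∞)) = (((n + p : ℕ) : ℕ∞) + ((k * p : ℕ) : ℕ∞)) := by
      push_cast; ring
    have e2 : ((n + p : ℕ) : ℕ∞) = (n : ℕ∞) + (p : ℕ∞) := by push_cast; ring
    rw [e1, ih (n + p) (by omega), e2, h n hn]
    push_cast; ring

lemma key_min_per (f g : ℕ∞ → ℕ∞) (N P a b : ℕ) (hP : 1 ≤ P)
    (hf : ∀ n : ℕ, N ≤ n → f ((n:ℕ∞) + (P:ℕ∞)) = f n + (a:ℕ∞))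
    (hg : ∀ n : ℕ, N ≤ n → g ((n:ℕ∞) + (P:ℕ∞)) = g n + (b:ℕ∞))
    (hfin : ∀ n : ℕ, f n ≠ ⊤)
    (hab : a ≤ b) :
    ∃ M : ℕ, ∀ n : ℕ, M ≤ n →
      min (f ((n:ℕ∞)+(P:ℕ∞))) (g ((n:ℕ∞)+(P:ℕ∞))) = min (f n) (g n) + (a:ℕ∞) := by
  rcases eq_or_lt_of_le hab with heq | hlt
  · refine ⟨N, fun n hn => ?_⟩
    rw [hf n hn, hg n hn, ← heq, min_add_add_right]
  · set K := (Finset.range P).sup (fun r => (f ((N + r : ℕ) : ℕ∞)).toNat) with hK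
    have hle : ∀ n : ℕ, N + K * P ≤ n → f n ≤ g n := by
      intro n hn
      set m := n - N with hmdef
      set k := m / P with hkdef
      set r := m % P with hrdef
      have hm : k * P + r = m := by rw [mul_comm]; exact Nat.div_add_mod m P
      have hkK : K ≤ k := by
        apply (Nat.le_div_iff_mul_le (by omega : 0 < P)).mpr
        omega
      have hrP : r < P := Nat.mod_lt _ (by omega)
      have hn' : (n : ℕ∞) = ((N + r : ℕ) : ℕ∞) + ((k * P : ℕ) : ℕ∞) := by
        have : n = (N + r) + k * P := by omega
        rw [this]; push_cast; ring
      have hfn : f n = f ((N + r : ℕ) : ℕ∞) + ((k * a : ℕ) : ℕ∞) := by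
        rw [hn']; exact iterate_per f N P a hf k (N + r) (Nat.le_add_right _ _)
      have hgn : g n = g ((N + r : ℕ) : ℕ∞) + ((k * b : ℕ) : ℕ∞) := by
        rw [hn']; exact iterate_per g N P b hg k (N + r) (Nat.le_add_right _ _)
      rw [hfn, hgn]
      have h1 : f ((N + r : ℕ) : ℕ∞) ≤ (k : ℕ∞) := by
        have h2 : (f ((N + r : ℕ) : ℕ∞)).toNat ≤ K := by
          rw [hK]; exact Finset.le_sup (f := fun r => (f ((N + r : ℕ) : ℕ∞)).toNat) (Finset.mem_range.mpr hrP)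
        have h3 : f ((N + r : ℕ) : ℕ∞) = ((f ((N + r : ℕ) : ℕ∞)).toNat : ℕ∞) := (ENat.coe_toNat (hfin _)).symm
        rw [h3]
        exact_mod_cast le_trans h2 hkK
      calc f ((N + r : ℕ) : ℕ∞) + ((k * a : ℕ) : ℕ∞) ≤ (k : ℕ∞) + ((k * a : ℕ) : ℕ∞) :=
            add_le_add_left h1 _
        _ = ((k + k * a : ℕ) : ℕ∞) := by push_cast; ring
        _ ≤ ((k * b : ℕ) : ℕ∞) := by
            have : k + k * a ≤ k * b := by
              calc k + k * a = k * (a + 1) := by ring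
                _ ≤ k * b := Nat.mul_le_mul_left k (by omega)
            exact_mod_cast this
        _ ≤ g ((N + r : ℕ) : ℕ∞) + ((k * b : ℕ) : ℕ∞) := le_add_self
    refine ⟨N + K * P, fun n hn => ?_⟩
    have e : ((n : ℕ∞) + (P : ℕ∞)) = ((n + P : ℕ) : ℕ∞) := by push_cast; ring
    have h1 : min (f ((n:ℕ∞)+(P:ℕ∞))) (g ((n:ℕ∞)+(P:ℕ∞))) = f ((n:ℕ∞)+(P:ℕ∞)) := by
      apply min_eq_left
      rw [e]; exact hle (n + P) (by omega)
    have h2 : min (f n) (g n) = f n := min_eq_left (hle n hn)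
    rw [h1, h2, hf n (by omega)]

/-- The pointwise infimum of two periodically increasing functions on ℕ∞ is
periodically increasing. -/
theorem perInc_min (f g : ℕ∞ → ℕ∞) (hf : PerInc f) (hg : PerInc g) :
    PerInc (fun n => min (f n) (g n)) := by
  obtain ⟨hfm, hfc, hft, Nf, p, q, hp1, hper⟩ := hf
  obtain ⟨hgm, hgc, hgt, Ng, p', q', hp'1, hper'⟩ := hg
  refine ⟨hfm.min hgm, ?_, ?_, ?_⟩
  · intro c hc
    simp only
    rw [hfc c hc, hgc c hc]
    exact (iSup_min_of_monotone _ _ (hfm.comp hc) (hgm.comp hc)).symm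
  · simp only
    rw [hft, hgt]
    exact (iSup_min_of_monotone (fun n : ℕ => f n) (fun n : ℕ => g n)
      (hfm.comp Nat.mono_cast) (hgm.comp Nat.mono_cast)).symm
  · set P := p * p' with hPdef
    set A := p' * q with hAdef
    set B := p * q' with hBdef
    have hPpos : 1 ≤ P := Nat.mul_pos hp1 hp'1
    set N0 := max Nf Ng with hN0def
    have hfP : ∀ n : ℕ, N0 ≤ n → f ((n:ℕ∞) + (P:ℕ∞)) = f n + (A:ℕ∞) := by
      intro n hn
      have := iterate_per f Nf p q hper p' n (le_trans (le_max_left _ _) hn)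
      rwa [Nat.mul_comm p' p] at this
    have hgP : ∀ n : ℕ, N0 ≤ n → g ((n:ℕ∞) + (P:ℕ∞)) = g n + (B:ℕ∞) := by
      intro n hn
      exact iterate_per g Ng p' q' hper' p n (le_trans (le_max_right _ _) hn)
    by_cases hftop : ∃ n : ℕ, f n = ⊤
    · obtain ⟨n0, hn0⟩ := hftop
      have hall : ∀ m : ℕ, n0 ≤ m → f m = ⊤ := fun m hm =>
        top_le_iff.mp (hn0 ▸ hfm (by exact_mod_cast hm))
      refine ⟨max n0 Ng, p', q', hp'1, fun n hn => ?_⟩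
      simp only
      have e : (n:ℕ∞) + (p':ℕ∞) = ((n + p' : ℕ):ℕ∞) := by push_cast; ring
      have h1 : f ((n:ℕ∞) + (p':ℕ∞)) = ⊤ := by
        rw [e]; exact hall (n + p') (by omega)
      rw [h1, hall n (by omega), hper' n (le_trans (le_max_right _ _) hn)]
      simp
    · by_cases hgtop : ∃ n : ℕ, g n = ⊤
      · obtain ⟨n0, hn0⟩ := hgtop
        have hall : ∀ m : ℕ, n0 ≤ m → g m = ⊤ := fun m hm =>
          top_le_iff.mp (hn0 ▸ hgm (by exact_mod_cast hm))
        refine ⟨max n0 Nf, p, q, hp1, fun n hn => ?_⟩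
        simp only
        have e : (n:ℕ∞) + (p:ℕ∞) = ((n + p : ℕ):ℕ∞) := by push_cast; ring
        have h1 : g ((n:ℕ∞) + (p:ℕ∞)) = ⊤ := by
          rw [e]; exact hall (n + p) (by omega)
        rw [h1, hall n (by omega), hper n (le_trans (le_max_right _ _) hn)]
        simp
      · push_neg at hftop hgtop
        rcases le_total A B with hAB | hBA
        · obtain ⟨M, hM⟩ := key_min_per f g N0 P A B hPpos hfP hgP hftop hAB
          exact ⟨M, P, A, hPpos, fun n hn => hM n hn⟩
        · obtain ⟨M, hM⟩ := key_min_per g f N0 P B A hPpos hgP hfP hgtop hBA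
          refine ⟨M, P, B, hPpos, fun n hn => ?_⟩
          simp only
          rw [min_comm (f ((n:ℕ∞) + (P:ℕ∞))) (g ((n:ℕ∞) + (P:ℕ∞))), min_comm (f n) (g n)]
          exact hM n hn
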